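/- (Duhamel identity) Let E be a complete normed algebra over ℝ (for instance the algebra of bounded linear operators on a Banach space), let A, B ∈ E, and let t ∈ ℝ. Then exp(t·(A+B)) = exp(t·A) + ∫_0^t exp((t−s)·(A+B)) · B · exp(s·A) ds, where the integral is the interval Bochner integral of the continuous E-valued integrand and exp is the exponential function in E. -/

import Mathlib

open MeasureTheory

/-- **Duhamel identity.** In a complete normed algebra `E` over `ℝ`, for
`A, B ∈ E` and `t ∈ ℝ`:
`exp(t(A+B)) = exp(tA) + ∫_0^t exp((t-s)(A+B)) B exp(sA) ds`. -/
theorem stmt_3 {E : Type*} [NormedRing E] [NormedAlgebra ℝ E] [CompleteSpace E]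
    (A B : E) (t : ℝ) :
    NormedSpace.exp (t • (A + B)) =
      NormedSpace.exp (t • A) +
        ∫ s in (0 : ℝ)..t,
          NormedSpace.exp ((t - s) • (A + B)) * B * NormedSpace.exp (s • A) := by
  set f : ℝ → E := fun s => NormedSpace.exp ((t - s) • (A + B)) * NormedSpace.exp (s • A)
    with hf
  have key : ∀ s : ℝ, HasDerivAt f
      (-(NormedSpace.exp ((t - s) • (A + B)) * B * NormedSpace.exp (s • A))) s := by
    intro s
    have hts : HasDerivAt (fun s : ℝ => t - s) (-1) s := by
      simpa using (hasDerivAt_id s).const_sub t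
    have h1 : HasDerivAt (fun s : ℝ => NormedSpace.exp ((t - s) • (A + B)))
        ((-1 : ℝ) • (NormedSpace.exp ((t - s) • (A + B)) * (A + B))) s :=
      (hasDerivAt_exp_smul_const (𝕂 := ℝ) (A + B) (t - s)).scomp s hts
    have h2 := hasDerivAt_exp_smul_const (𝕂 := ℝ) A s
    have hmul := h1.mul h2
    have hcomm : NormedSpace.exp (s • A) * A = A * NormedSpace.exp (s • A) :=
      ((Commute.refl A).smul_right s).exp_right |>.symm.eq
    convert hmul using 1
    · rfl
    rw [neg_one_smul]
    rw [mul_assoc, hcomm, ← mul_assoc]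
    noncomm_ring
  have hcont : Continuous fun s : ℝ =>
      NormedSpace.exp ((t - s) • (A + B)) * B * NormedSpace.exp (s • A) := by
    apply Continuous.mul
    · exact ((continuous_iff_continuousAt.2 fun x =>
          (NormedSpace.exp_analytic (𝕂 := ℝ) (𝔸 := E) x).continuousAt).comp
        (((continuous_const.sub continuous_id).smul continuous_const))).mul continuous_const
    · exact (continuous_iff_continuousAt.2 fun x =>
          (NormedSpace.exp_analytic (𝕂 := ℝ) (𝔸 := E) x).continuousAt).comp
        (continuous_id.smul continuous_const)
  have hint := intervalIntegral.integral_eq_sub_of_hasDerivAt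
    (f := f) (a := (0 : ℝ)) (b := t)
    (fun s _ => key s) (hcont.neg.intervalIntegrable 0 t)
  rw [intervalIntegral.integral_neg] at hint
  have hf0 : f 0 = NormedSpace.exp (t • (A + B)) := by
    simp [hf, NormedSpace.exp_zero]
  have hft : f t = NormedSpace.exp (t • A) := by
    simp [hf, NormedSpace.exp_zero]
  rw [hf0, hft] at hint
  have h2 : (∫ s in (0:ℝ)..t,
      NormedSpace.exp ((t - s) • (A + B)) * B * NormedSpace.exp (s • A)) =
      NormedSpace.exp (t • (A + B)) - NormedSpace.exp (t • A) := by
    have := congrArg Neg.neg hint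
    simpa [neg_sub] using this
  rw [h2]
  abel
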